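/- Let α : ℕ → (0,∞) be a shrinking sequence and let d_α be the associated ultrametric on 2^ℕ = (ℕ → {0,1}). Then (2^ℕ, d_α) is doubling if and only if there exists N ∈ ℕ such that for every k ∈ ℕ, the set {n ∈ ℕ : α(k)/2 ≤ α(n) ≤ α(k)} has at most N elements. -/

import Mathlib

open Metric Set
open scoped ENNReal NNReal

noncomputable section

/-- A metric space is doubling if there is `N` such that every closed ball of radius `r`
can be covered by at most `N` closed balls of radius `r / 2`. -/
def IsDoubling (X : Type*) [MetricSpace X] : Prop :=
  ∃ N : ℕ, ∀ (x : X) (r : ℝ), ∃ c : Finset X, c.card ≤ N ∧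
    Metric.closedBall x r ⊆ ⋃ y ∈ c, Metric.closedBall y (r / 2)

/-- Every `δ`-chain is trivial (constant). -/
def IsUniformlyDisconnectedWith (X : Type*) [MetricSpace X] (δ : ℝ) : Prop :=
  ∀ (N : ℕ) (x : ℕ → X),
    (∀ i : ℕ, 1 ≤ i → i ≤ N → dist (x (i - 1)) (x i) ≤ δ * dist (x 0) (x N)) →
    ∀ i ≤ N, x i = x 0

def IsUniformlyDisconnected (X : Type*) [MetricSpace X] : Prop :=
  ∃ δ : ℝ, 0 < δ ∧ δ < 1 ∧ IsUniformlyDisconnectedWith X δ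

/-- `ρ`-uniform perfectness. -/
def IsUniformlyPerfectWith (X : Type*) [MetricSpace X] (ρ : ℝ) : Prop :=
  ∀ (x : X) (r : ℝ), 0 < r → r < Metric.diam (Set.univ : Set X) →
    (Metric.closedBall x r \ Metric.ball x (ρ * r)).Nonempty

def IsUniformlyPerfect (X : Type*) [MetricSpace X] : Prop :=
  ∃ ρ : ℝ, 0 < ρ ∧ ρ ≤ 1 ∧ IsUniformlyPerfectWith X ρ

/-- A metric space has type `(u, v, w) ∈ {0,1}³` (here encoded by `Bool`s) if `u = 1` exactly
when it is doubling, `v = 1` exactly when it is uniformly disconnected, and `w = 1` exactly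
when it is uniformly perfect. -/
def HasType (X : Type*) [MetricSpace X] (u v w : Bool) : Prop :=
  (IsDoubling X ↔ u = true) ∧ (IsUniformlyDisconnected X ↔ v = true) ∧
    (IsUniformlyPerfect X ↔ w = true)

/-- `S_D`: points having no doubling neighborhood. -/
def SD (X : Type*) [MetricSpace X] : Set X :=
  {x : X | ∀ s ∈ nhds x, ¬ IsDoubling ↥s}

/-- `S_UD`: points having no uniformly disconnected neighborhood. -/
def SUD (X : Type*) [MetricSpace X] : Set X :=
  {x : X | ∀ s ∈ nhds x, ¬ IsUniformlyDisconnected ↥s}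

/-- `S_UP`: points having no uniformly perfect neighborhood. -/
def SUP (X : Type*) [MetricSpace X] : Set X :=
  {x : X | ∀ s ∈ nhds x, ¬ IsUniformlyPerfect ↥s}

/-- The ternary correspondence map `T(x) = Σ_{i≥1} 2 x_i / 3^i` (indices shifted to start
at `0`). -/
def cantorT (x : ℕ → Bool) : ℝ :=
  ∑' i : ℕ, 2 * (if x i then (1 : ℝ) else 0) / 3 ^ (i + 1)

/-- A Cantor space: a topological space homeomorphic to the middle-third Cantor set
(`cantorSet` is Mathlib's middle-third Cantor set in `ℝ`). -/
def IsCantorSpace (X : Type*) [TopologicalSpace X] : Prop :=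
  Nonempty (X ≃ₜ ↥cantorSet)

/-- The first index at which `x` and `y` differ. -/
def seqV (x y : ℕ → Bool) : ℕ := sInf {n | x n ≠ y n}

-- The standard ultrametric `e(x,y) = 3^{-(v(x,y)+1)}` on `2^ℕ` (indices starting at `0`,
-- corresponding to `3^{-min{n ≥ 1 : x_n ≠ y_n}}` with indices starting at `1`).
open Classical in
def cantorE (x y : ℕ → Bool) : ℝ :=
  if x = y then 0 else (3 : ℝ)⁻¹ ^ (seqV x y + 1)

/-- A shrinking sequence: positive, non-increasing, converging to `0`. -/
def IsShrinking (α : ℕ → ℝ) : Prop :=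
  (∀ n, 0 < α n) ∧ (∀ m n : ℕ, m ≤ n → α n ≤ α m) ∧
    Filter.Tendsto α Filter.atTop (nhds 0)

-- The distance `d_α(x,y) = α (v(x,y))` associated with a sequence `α`.
open Classical in
def seqDist (α : ℕ → ℝ) (x y : ℕ → Bool) : ℝ :=
  if x = y then 0 else α (seqV x y)

lemma seqV_comm (x y : ℕ → Bool) : seqV x y = seqV y x := by
  unfold seqV
  congr 1
  ext n
  exact ne_comm

lemma seqDist_self (α : ℕ → ℝ) (x : ℕ → Bool) : seqDist α x x = 0 := by
  rw [seqDist, if_pos rfl]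

lemma seqDist_of_ne (α : ℕ → ℝ) {x y : ℕ → Bool} (h : x ≠ y) :
    seqDist α x y = α (seqV x y) := by
  rw [seqDist, if_neg h]

lemma seqDist_nonneg {α : ℕ → ℝ} (hα : ∀ n, 0 < α n) (x y : ℕ → Bool) :
    0 ≤ seqDist α x y := by
  rcases eq_or_ne x y with h | h
  · rw [h, seqDist_self]
  · rw [seqDist_of_ne α h]
    exact (hα _).le

lemma min_seqV_le {x y z : ℕ → Bool} (hxz : x ≠ z) :
    min (seqV x y) (seqV y z) ≤ seqV x z := by
  have hne : {n | x n ≠ z n}.Nonempty := by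
    rcases Function.ne_iff.mp hxz with ⟨n, hn⟩
    exact ⟨n, hn⟩
  have hmem : x (seqV x z) ≠ z (seqV x z) := Nat.sInf_mem hne
  rcases ne_or_eq (x (seqV x z)) (y (seqV x z)) with h | h
  · exact le_trans (min_le_left _ _) (Nat.sInf_le h)
  · have h' : y (seqV x z) ≠ z (seqV x z) := by rw [← h]; exact hmem
    exact le_trans (min_le_right _ _) (Nat.sInf_le h')

/-- The sequentially metrized Cantor space `(2^ℕ, d_α)` for a shrinking sequence `α`. -/
def seqMetricSpace (α : ℕ → ℝ) (hα : IsShrinking α) : MetricSpace (ℕ → Bool) where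
  dist := seqDist α
  dist_self x := seqDist_self α x
  dist_comm x y := by
    show seqDist α x y = seqDist α y x
    rcases eq_or_ne x y with h | h
    · rw [h]
    · rw [seqDist_of_ne α h, seqDist_of_ne α h.symm, seqV_comm]
  dist_triangle x y z := by
    show seqDist α x z ≤ seqDist α x y + seqDist α y z
    rcases eq_or_ne x z with hxz | hxz
    · rw [hxz, seqDist_self]
      exact add_nonneg (seqDist_nonneg hα.1 _ _) (seqDist_nonneg hα.1 _ _)
    rcases eq_or_ne x y with hxy | hxy
    · subst hxy
      rw [seqDist_self, zero_add]
    rcases eq_or_ne y z with hyz | hyz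
    · subst hyz
      rw [seqDist_self, add_zero]
    rw [seqDist_of_ne α hxz, seqDist_of_ne α hxy, seqDist_of_ne α hyz]
    have h1 : α (seqV x z) ≤ α (min (seqV x y) (seqV y z)) :=
      hα.2.1 _ _ (min_seqV_le hxz)
    rcases min_cases (seqV x y) (seqV y z) with ⟨he, _⟩ | ⟨he, _⟩
    · rw [he] at h1
      exact h1.trans (le_add_of_nonneg_right (hα.1 _).le)
    · rw [he] at h1
      exact h1.trans (le_add_of_nonneg_left (hα.1 _).le)
  eq_of_dist_eq_zero := by
    intro x y h
    by_contra hne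
    have h' : seqDist α x y = 0 := h
    rw [seqDist_of_ne α hne] at h'
    exact absurd h' (ne_of_gt (hα.1 _))

/-- The Assouad dimension of a metric space. -/
def assouadDim (X : Type*) [MetricSpace X] : ℝ≥0∞ :=
  sInf {d : ℝ≥0∞ | ∃ s : ℝ, 0 < s ∧ d = ENNReal.ofReal s ∧ ∃ K : ℝ, 0 < K ∧
    ∀ ε : ℝ, 0 < ε → ε < 2 → ∀ r : ℝ, 0 < r → ∀ x : X,
      ∃ c : Finset X, (c.card : ℝ) ≤ K * ε ^ (-s) ∧
        Metric.closedBall x r ⊆ ⋃ y ∈ c, Metric.closedBall y (ε * r)}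

/-- The Hausdorff dimension of (the whole of) a metric space. -/
def hausdorffDim (X : Type*) [MetricSpace X] : ℝ≥0∞ := dimH (Set.univ : Set X)

/-- The topology induced by a metric. -/
def metricTopology {X : Type*} (m : MetricSpace X) : TopologicalSpace X :=
  m.toPseudoMetricSpace.toUniformSpace.toTopologicalSpace

/-- `f : X → Y` is quasi-symmetric: for some self-homeomorphism `η` of `[0,∞)`,
`d(f x, f y)/d(f x, f z) ≤ η (d(x,y)/d(x,z))` for all distinct `x, y, z`. -/
def IsQuasiSymmetric {X Y : Type*} [MetricSpace X] [MetricSpace Y] (f : X → Y) : Prop :=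
  ∃ η : Homeomorph (Set.Ici (0 : ℝ)) (Set.Ici (0 : ℝ)),
    ∀ x y z : X, x ≠ y → x ≠ z → y ≠ z →
      dist (f x) (f y) / dist (f x) (f z) ≤
        (η ⟨dist x y / dist x z, div_nonneg dist_nonneg dist_nonneg⟩ : ℝ)

/-- Two metric spaces (given by explicit metric structures) are quasi-symmetrically
equivalent if there is a quasi-symmetric homeomorphism between them. -/
def QSEquiv (X Y : Type*) (mX : MetricSpace X) (mY : MetricSpace Y) : Prop :=
  ∃ f : @Homeomorph X Y (metricTopology mX) (metricTopology mY),
    @IsQuasiSymmetric X Y mX mY f.toEquiv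


/-- The `ℓ^∞`-product metric (the sup metric) on `X × Y`. -/
def prodMetric {X Y : Type*} (mX : MetricSpace X) (mY : MetricSpace Y) :
    MetricSpace (X × Y) :=
  letI := mX; letI := mY; Prod.metricSpaceMax

lemma seqV_ge_of_agree {x y : ℕ → Bool} (hne : x ≠ y) {M : ℕ}
    (h : ∀ n < M, x n = y n) : M ≤ seqV x y := by
  have hne' : {n | x n ≠ y n}.Nonempty := by
    rcases Function.ne_iff.mp hne with ⟨n, hn⟩
    exact ⟨n, hn⟩
  have hmem : x (seqV x y) ≠ y (seqV x y) := Nat.sInf_mem hne'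
  by_contra hc
  exact hmem (h _ (Nat.lt_of_not_le hc))

lemma seqDist_ultra {α : ℕ → ℝ} (hα : IsShrinking α) (x y z : ℕ → Bool) :
    seqDist α x z ≤ max (seqDist α x y) (seqDist α y z) := by
  rcases eq_or_ne x z with hxz | hxz
  · rw [hxz, seqDist_self]
    exact le_max_of_le_left (seqDist_nonneg hα.1 _ _)
  rcases eq_or_ne x y with hxy | hxy
  · subst hxy; exact le_max_right _ _
  rcases eq_or_ne y z with hyz | hyz
  · subst hyz; exact le_max_left _ _
  rw [seqDist_of_ne α hxz, seqDist_of_ne α hxy, seqDist_of_ne α hyz]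
  have h1 : α (seqV x z) ≤ α (min (seqV x y) (seqV y z)) :=
    hα.2.1 _ _ (min_seqV_le hxz)
  rcases min_cases (seqV x y) (seqV y z) with ⟨he, _⟩ | ⟨he, _⟩
  · rw [he] at h1; exact le_max_of_le_left h1
  · rw [he] at h1; exact le_max_of_le_right h1

lemma seqDist_le_of_agree {α : ℕ → ℝ} (hα : IsShrinking α) {x y : ℕ → Bool} {M : ℕ}
    (h : ∀ n < M, x n = y n) : seqDist α x y ≤ α M := by
  rcases eq_or_ne x y with hxy | hxy
  · rw [hxy, seqDist_self]; exact (hα.1 _).le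
  · rw [seqDist_of_ne α hxy]
    exact hα.2.1 _ _ (seqV_ge_of_agree hxy h)

lemma agree_of_seqDist_le {α : ℕ → ℝ} (hα : IsShrinking α) {x y : ℕ → Bool} {r : ℝ}
    (h : seqDist α x y ≤ r) {n : ℕ} (hn : r < α n) : x n = y n := by
  rcases eq_or_ne x y with hxy | hxy
  · rw [hxy]
  · by_contra hc
    rw [seqDist_of_ne α hxy] at h
    have h1 : seqV x y ≤ n := Nat.sInf_le hc
    have := hα.2.1 _ _ h1
    linarith

theorem statement_15 (α : ℕ → ℝ) (hα : IsShrinking α) :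
    @IsDoubling (ℕ → Bool) (seqMetricSpace α hα) ↔
      ∃ N : ℕ, ∀ k : ℕ, {n : ℕ | α k / 2 ≤ α n ∧ α n ≤ α k}.encard ≤ (N : ℕ∞) := by
  classical
  letI : MetricSpace (ℕ → Bool) := seqMetricSpace α hα
  obtain ⟨hpos, hmono, hlim⟩ := id hα
  set f : ℝ → ℕ := fun r => sInf {n | α n ≤ r} with hf
  have hex : ∀ r : ℝ, 0 < r → {n | α n ≤ r}.Nonempty := by
    intro r hr
    obtain ⟨n, hn⟩ := (hlim.eventually_lt_const hr).exists
    exact ⟨n, hn.le⟩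
  have hfle : ∀ r : ℝ, 0 < r → α (f r) ≤ r := fun r hr => Nat.sInf_mem (hex r hr)
  have hflt : ∀ (r : ℝ) (n : ℕ), n < f r → r < α n := by
    intro r n hn
    have : n ∉ {n | α n ≤ r} := Nat.notMem_of_lt_sInf hn
    exact lt_of_not_ge this
  have hdist : ∀ x y : ℕ → Bool, dist x y = seqDist α x y := fun _ _ => rfl
  constructor
  · rintro ⟨N, hN⟩
    -- key step: for every r > 0, f (r / 2) ≤ f r + N
    have step : ∀ r : ℝ, 0 < r → f (r / 2) ≤ f r + N := by
      intro r hr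
      by_contra hcon
      push_neg at hcon
      set m := f r with hm
      set m' := f (r / 2) with hm'
      obtain ⟨c, hcard, hcov⟩ := hN (fun _ => false) r
      set z : (Fin (m' - m) → Bool) → (ℕ → Bool) := fun s n =>
        if h : m ≤ n ∧ n < m' then s ⟨n - m, by omega⟩ else false with hz
      have hz_mem : ∀ s, z s ∈ Metric.closedBall (fun _ => false) r := by
        intro s
        rw [Metric.mem_closedBall, hdist]
        have : ∀ n < m, z s n = (fun _ => false : ℕ → Bool) n := by
          intro n hn
          simp only [hz]
          rw [dif_neg (by omega)]
        exact (seqDist_le_of_agree hα this).trans (hfle r hr)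
      have hpick : ∀ s : Fin (m' - m) → Bool,
          ∃ y ∈ c, z s ∈ Metric.closedBall y (r / 2) := by
        intro s
        have := hcov (hz_mem s)
        simpa using this
      choose y hyc hzy using hpick
      have hinj : Function.Injective y := by
        intro s s' heq
        by_contra hneq
        obtain ⟨i, hi⟩ := Function.ne_iff.mp hneq
        have hzi : z s (m + i) ≠ z s' (m + i) := by
          have hcond : m ≤ m + i ∧ m + i < m' := ⟨by omega, by have := i.2; omega⟩
          simp only [hz]
          rw [dif_pos hcond, dif_pos hcond]
          have : (⟨m + i - m, by omega⟩ : Fin (m' - m)) = i := by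
            ext; simp
          rw [this]
          exact hi
        have hne : z s ≠ z s' := fun h => hzi (congrFun h _)
        have hVle : seqV (z s) (z s') ≤ m + i := Nat.sInf_le hzi
        have hlt : r / 2 < seqDist α (z s) (z s') := by
          rw [seqDist_of_ne α hne]
          have h1 : r / 2 < α (m + i) := hflt (r / 2) _ (by have := i.2; omega)
          exact h1.trans_le (hmono _ _ hVle)
        have hd1 : seqDist α (z s) (y s) ≤ r / 2 := by
          rw [← hdist]; exact Metric.mem_closedBall.mp (hzy s)
        have hd2 : seqDist α (y s) (z s') ≤ r / 2 := by
          have h2 := Metric.mem_closedBall.mp (hzy s')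
          rw [← heq] at h2
          rw [dist_comm, hdist] at h2
          exact h2
        have := seqDist_ultra hα (z s) (y s) (z s')
        have hmax : max (seqDist α (z s) (y s)) (seqDist α (y s) (z s')) ≤ r / 2 :=
          max_le hd1 hd2
        linarith
      have hcard2 : Fintype.card (Fin (m' - m) → Bool) ≤ c.card := by
        classical
        have := Finset.card_le_card_of_injOn (s := (Finset.univ : Finset (Fin (m' - m) → Bool)))
          y (fun s _ => hyc s) (hinj.injOn)
        simpa using this
      rw [Fintype.card_fun] at hcard2
      simp only [Fintype.card_bool, Fintype.card_fin] at hcard2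
      have h2N : 2 ^ (m' - m) ≤ N := hcard2.trans hcard
      have hNlt : N < 2 ^ N := Nat.lt_two_pow_self (n := N)
      have : 2 ^ N ≤ 2 ^ (m' - m) := Nat.pow_le_pow_right (by norm_num) (by omega)
      omega
    refine ⟨2 * N, fun k => ?_⟩
    have hk : 0 < α k := hpos k
    have hsub : {n : ℕ | α k / 2 ≤ α n ∧ α n ≤ α k} ⊆
        Set.Ico (f (α k)) (f (α k / 4)) := by
      rintro n ⟨h1, h2⟩
      constructor
      · by_contra hc
        have := hflt (α k) n (Nat.lt_of_not_le hc)
        linarith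
      · by_contra hc
        push_neg at hc
        have : α n ≤ α (f (α k / 4)) := hmono _ _ hc
        have h4 : α (f (α k / 4)) ≤ α k / 4 := hfle _ (by linarith)
        linarith
    have hstep1 : f (α k / 2) ≤ f (α k) + N := step (α k) hk
    have hstep2 : f (α k / 4) ≤ f (α k / 2) + N := by
      have := step (α k / 2) (by linarith)
      rwa [div_div, (by norm_num : (2 : ℝ) * 2 = 4)] at this
    calc {n : ℕ | α k / 2 ≤ α n ∧ α n ≤ α k}.encard
        ≤ (Set.Ico (f (α k)) (f (α k / 4))).encard := Set.encard_le_encard hsub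
      _ = ((Finset.Ico (f (α k)) (f (α k / 4)) : Finset ℕ) : Set ℕ).encard := by
          rw [Finset.coe_Ico]
      _ = (Finset.Ico (f (α k)) (f (α k / 4))).card :=
          Set.encard_coe_eq_coe_finsetCard _
      _ = ((f (α k / 4) - f (α k) : ℕ) : ℕ∞) := by rw [Nat.card_Ico]
      _ ≤ ((2 * N : ℕ) : ℕ∞) := by
          have hle : f (α k / 4) - f (α k) ≤ 2 * N := by omega
          exact Nat.cast_le.mpr hle
  · rintro ⟨N, hN⟩
    refine ⟨2 ^ N, fun x r => ?_⟩
    rcases le_or_gt r 0 with hr | hr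
    · refine ⟨{x}, by simp [Nat.one_le_two_pow], fun y hy => ?_⟩
      simp only [Finset.mem_singleton, Set.iUnion_iUnion_eq_left]
      have : dist y x ≤ r := Metric.mem_closedBall.mp hy
      exact Metric.mem_closedBall.mpr (this.trans (by linarith))
    · set m := f r with hm
      set m' := f (r / 2) with hm'
      have hstep : m' ≤ m + N := by
        rcases le_or_gt m' m with h | h
        · omega
        have hsub : Set.Ico m m' ⊆ {n : ℕ | α m / 2 ≤ α n ∧ α n ≤ α m} := by
          rintro n ⟨h1, h2⟩
          refine ⟨?_, hmono _ _ h1⟩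
          have hrn : r / 2 < α n := hflt (r / 2) n h2
          have : α m ≤ r := hfle r hr
          linarith
        have hcard : (Set.Ico m m').encard ≤ (N : ℕ∞) := (Set.encard_le_encard hsub).trans (hN m)
        have : ((Finset.Ico m m').card : ℕ∞) ≤ (N : ℕ∞) := by
          rwa [← Set.encard_coe_eq_coe_finsetCard, Finset.coe_Ico]
        rw [Nat.card_Ico] at this
        have := Nat.cast_le.mp this
        omega
      set g : (Fin (m' - m) → Bool) → (ℕ → Bool) := fun s n =>
        if h : m ≤ n ∧ n < m' then s ⟨n - m, by omega⟩ else x n with hg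
      refine ⟨Finset.image g Finset.univ, ?_, ?_⟩
      · calc (Finset.image g Finset.univ).card ≤ (Finset.univ : Finset (Fin (m' - m) → Bool)).card :=
              Finset.card_image_le
          _ = 2 ^ (m' - m) := by
              rw [Finset.card_univ, Fintype.card_fun]
              simp
          _ ≤ 2 ^ N := Nat.pow_le_pow_right (by norm_num) (by omega)
      · intro w hw
        have hwx : seqDist α w x ≤ r := by
          rw [← hdist]; exact Metric.mem_closedBall.mp hw
        set s : Fin (m' - m) → Bool := fun i => w (m + i) with hs
        refine Set.mem_iUnion₂.mpr ⟨g s, Finset.mem_image_of_mem g (Finset.mem_univ s), ?_⟩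
        rw [Metric.mem_closedBall, hdist]
        have hagree : ∀ n < m', w n = g s n := by
          intro n hn
          rcases lt_or_ge n m with h1 | h1
          · have hx : w n = x n :=
              agree_of_seqDist_le hα hwx (hflt r n h1)
            simp only [hg]
            rw [dif_neg (by omega), hx]
          · simp only [hg, hs]
            rw [dif_pos ⟨h1, hn⟩]
            congr 1
            omega
        exact (seqDist_le_of_agree hα hagree).trans (hfle _ (by linarith))

end
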